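/- Let n ≥ 6 and let c be a (5,8)-coloring of K_n. If S₁ and S₂ are two distinct monochromatic components each of which is a star with 3 edges (on 4 vertices), then the vertex sets of S₁ and S₂ share at most one vertex. -/

import Mathlib

/-- The number of distinct colors appearing on the (non-loop) edges of `K_n`
inside the vertex set `S`, under the edge-coloring `c`. -/
noncomputable def numColorsOn {n : ℕ} {C : Type*} (c : Sym2 (Fin n) → C) (S : Finset (Fin n)) : ℕ :=
  (c '' {e : Sym2 (Fin n) | e ∈ S.sym2 ∧ ¬ e.IsDiag}).ncard

/-- `c` is a `(p,q)`-coloring of `K_n`: every set of `p` vertices spans edges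
bearing at least `q` distinct colors. -/
def IsPQColoring (n p q : ℕ) {C : Type*} (c : Sym2 (Fin n) → C) : Prop :=
  ∀ S : Finset (Fin n), S.card = p → q ≤ numColorsOn c S

private lemma triple_card_le {α : Type*} [DecidableEq α] (u v w : α) :
    ({u, v, w} : Finset α).card ≤ 3 := by
  have h1 := Finset.card_insert_le u ({v, w} : Finset α)
  have h2 := Finset.card_insert_le v ({w} : Finset α)
  simp only [Finset.card_singleton] at *
  omega

private lemma four_distinct {α : Type*} [DecidableEq α] {x a b d : α}
    (h : ({x, a, b, d} : Finset α).card = 4) :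
    x ≠ a ∧ x ≠ b ∧ x ≠ d ∧ a ≠ b ∧ a ≠ d ∧ b ≠ d := by
  have key : ∀ (u v w : α) (s : Finset α), s ⊆ {u, v, w} → s.card ≠ 4 := by
    intro u v w s hs h4
    have := (Finset.card_le_card hs).trans (triple_card_le u v w)
    omega
  refine ⟨?_, ?_, ?_, ?_, ?_, ?_⟩ <;> rintro rfl
  · exact key x b d _ (by intro y hy; simp at hy ⊢; tauto) h
  · exact key x a d _ (by intro y hy; simp at hy ⊢; tauto) h
  · exact key x a b _ (by intro y hy; simp at hy ⊢; tauto) h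
  · exact key x a d _ (by intro y hy; simp at hy ⊢; tauto) h
  · exact key x a b _ (by intro y hy; simp at hy ⊢; tauto) h
  · exact key x a b _ (by intro y hy; simp at hy ⊢; tauto) h

private lemma card_filter_not_diag {n : ℕ} (S : Finset (Fin n)) :
    (S.sym2.filter fun e => ¬ e.IsDiag).card = Nat.choose S.card 2 := by
  have hsplit := Finset.card_filter_add_card_filter_not
    (s := S.sym2) (p := fun e => e.IsDiag)
  have hdiag : (S.sym2.filter fun e => e.IsDiag) = S.image (fun u => s(u, u)) := by
    ext e
    induction e using Sym2.ind with
    | _ u v =>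
      simp only [Finset.mem_filter, Finset.mk_mem_sym2_iff, Sym2.mk_isDiag_iff,
        Finset.mem_image]
      constructor
      · rintro ⟨⟨hu, _⟩, rfl⟩; exact ⟨u, hu, rfl⟩
      · rintro ⟨w, hw, hwe⟩
        rcases Sym2.eq_iff.1 hwe with ⟨rfl, rfl⟩ | ⟨rfl, rfl⟩ <;> exact ⟨⟨hw, hw⟩, rfl⟩
  have himg : (S.image fun u => s(u, u)).card = S.card := by
    apply Finset.card_image_of_injective
    intro u v huv
    rcases Sym2.eq_iff.1 huv with ⟨rfl, _⟩ | ⟨rfl, _⟩ <;> rfl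
  rw [Finset.card_sym2, hdiag, himg] at hsplit
  have hch : (S.card + 1).choose 2 = S.card.choose 1 + S.card.choose 2 :=
    Nat.choose_succ_succ S.card 1
  rw [Nat.choose_one_right] at hch
  omega

private lemma core {n : ℕ} {C : Type} {c : Sym2 (Fin n) → C}
    (hc : IsPQColoring n 5 8 c) {k : C} {x a b d : Fin n}
    (hcard : ({x, a, b, d} : Finset (Fin n)).card = 4)
    (h1 : c s(x, a) = k) (h2 : c s(x, b) = k) (h3 : c s(x, d) = k)
    {S : Finset (Fin n)} (hS : S.card = 5) (hsub : ({x, a, b, d} : Finset (Fin n)) ⊆ S)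
    {e1 e2 : Sym2 (Fin n)}
    (he1S : e1 ∈ S.sym2) (he1d : ¬ e1.IsDiag)
    (he2S : e2 ∈ S.sym2) (he2d : ¬ e2.IsDiag)
    (h1a : e1 ≠ s(x, a)) (h1b : e1 ≠ s(x, b)) (h1d : e1 ≠ s(x, d))
    (h2a : e2 ≠ s(x, a)) (h2b : e2 ≠ s(x, b)) (hne : e2 ≠ e1)
    (hcc : c e1 = c e2) : False := by
  obtain ⟨hxa, hxb, hxd, hab, had, hbd⟩ := four_distinct hcard
  set E : Set (Sym2 (Fin n)) := {e : Sym2 (Fin n) | e ∈ S.sym2 ∧ ¬ e.IsDiag} with hE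
  have hEeq : E = ↑(S.sym2.filter fun e => ¬ e.IsDiag) := by
    ext e; simp [hE]
  have hEfin : E.Finite := by rw [hEeq]; exact (S.sym2.filter _).finite_toSet
  have hxS : x ∈ S := hsub (by simp)
  have haS : a ∈ S := hsub (by simp)
  have hbS : b ∈ S := hsub (by simp)
  have hdS : d ∈ S := hsub (by simp)
  have hsxaE : s(x, a) ∈ E := ⟨Finset.mk_mem_sym2_iff.2 ⟨hxS, haS⟩,
    fun h => hxa (Sym2.mk_isDiag_iff.1 h)⟩
  have hsxbE : s(x, b) ∈ E := ⟨Finset.mk_mem_sym2_iff.2 ⟨hxS, hbS⟩,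
    fun h => hxb (Sym2.mk_isDiag_iff.1 h)⟩
  have hsxdE : s(x, d) ∈ E := ⟨Finset.mk_mem_sym2_iff.2 ⟨hxS, hdS⟩,
    fun h => hxd (Sym2.mk_isDiag_iff.1 h)⟩
  have he1E : e1 ∈ E := ⟨he1S, he1d⟩
  have he2E : e2 ∈ E := ⟨he2S, he2d⟩
  set A : Set (Sym2 (Fin n)) := {s(x, a), s(x, b), e1} with hA
  have hAsub : A ⊆ E := by
    intro f hf
    rcases hf with rfl | rfl | rfl
    · exact hsxaE
    · exact hsxbE
    · exact he1E
  have hsab : s(x, a) ≠ s(x, b) := by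
    intro h
    rcases Sym2.eq_iff.1 h with ⟨_, h2⟩ | ⟨h1, _⟩
    · exact hab h2
    · exact hxb h1
  have hsad : s(x, a) ≠ s(x, d) := by
    intro h
    rcases Sym2.eq_iff.1 h with ⟨_, h2⟩ | ⟨h1, _⟩
    · exact had h2
    · exact hxd h1
  have hsbd : s(x, b) ≠ s(x, d) := by
    intro h
    rcases Sym2.eq_iff.1 h with ⟨_, h2⟩ | ⟨h1, _⟩
    · exact hbd h2
    · exact hxd h1
  have hsxdA : s(x, d) ∉ A := by
    intro h
    rcases h with h | h | h
    · exact hsad h.symm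
    · exact hsbd h.symm
    · exact h1d h.symm
  have he2A : e2 ∉ A := by
    intro h
    rcases h with h | h | h
    · exact h2a h
    · exact h2b h
    · exact hne h
  have himg : c '' E ⊆ c '' (E \ A) := by
    rintro y ⟨f, hf, rfl⟩
    by_cases hfa : f = s(x, a)
    · exact ⟨s(x, d), ⟨hsxdE, hsxdA⟩, by rw [hfa, h1, h3]⟩
    by_cases hfb : f = s(x, b)
    · exact ⟨s(x, d), ⟨hsxdE, hsxdA⟩, by rw [hfb, h2, h3]⟩
    by_cases hfe : f = e1
    · exact ⟨e2, ⟨he2E, he2A⟩, by rw [hfe, hcc]⟩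
    · exact ⟨f, ⟨hf, fun h => by rcases h with h | h | h <;> [exact hfa h; exact hfb h; exact hfe h]⟩, rfl⟩
  have hAcard : A.ncard = 3 := by
    rw [hA]
    rw [Set.ncard_insert_of_notMem (by
        intro h; rcases h with h | h
        · exact hsab h
        · exact h1a h.symm) (Set.Finite.insert _ (Set.finite_singleton _)),
      Set.ncard_insert_of_notMem (by
        intro h; rw [Set.mem_singleton_iff] at h; exact h1b h.symm)
        (Set.finite_singleton _),
      Set.ncard_singleton]
  have hE10 : E.ncard = 10 := by
    rw [hEeq, Set.ncard_coe_finset, card_filter_not_diag, hS]; decide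
  have h8 : 8 ≤ (c '' E).ncard := hc S hS
  have hle1 : (c '' E).ncard ≤ (c '' (E \ A)).ncard :=
    Set.ncard_le_ncard himg ((hEfin.diff (t := A)).image c)
  have hle2 : (c '' (E \ A)).ncard ≤ (E \ A).ncard :=
    Set.ncard_image_le (hEfin.diff (t := A))
  have hdiff : (E \ A).ncard = E.ncard - A.ncard :=
    Set.ncard_diff hAsub (hEfin.subset hAsub)
  omega

private lemma key {n : ℕ} {C : Type} {c : Sym2 (Fin n) → C}
    (hc : IsPQColoring n 5 8 c) {k : C} {x a b d : Fin n}
    (hcard : ({x, a, b, d} : Finset (Fin n)).card = 4)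
    (h1 : c s(x, a) = k) (h2 : c s(x, b) = k) (h3 : c s(x, d) = k)
    {S : Finset (Fin n)} (hS : S.card = 5) (hsub : ({x, a, b, d} : Finset (Fin n)) ⊆ S)
    {e1 e2 : Sym2 (Fin n)}
    (he1S : e1 ∈ S.sym2) (he1d : ¬ e1.IsDiag)
    (he2S : e2 ∈ S.sym2) (he2d : ¬ e2.IsDiag)
    (h1a : e1 ≠ s(x, a)) (h1b : e1 ≠ s(x, b)) (h1d : e1 ≠ s(x, d))
    (hne : e2 ≠ e1) (hcc : c e1 = c e2) : False := by
  obtain ⟨hxa, hxb, hxd, hab, had, hbd⟩ := four_distinct hcard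
  have hsab : s(x, a) ≠ s(x, b) := by
    intro h
    rcases Sym2.eq_iff.1 h with ⟨_, h2⟩ | ⟨h1, _⟩
    · exact hab h2
    · exact hxb h1
  have hsad : s(x, a) ≠ s(x, d) := by
    intro h
    rcases Sym2.eq_iff.1 h with ⟨_, h2⟩ | ⟨h1, _⟩
    · exact had h2
    · exact hxd h1
  have hsbd : s(x, b) ≠ s(x, d) := by
    intro h
    rcases Sym2.eq_iff.1 h with ⟨_, h2⟩ | ⟨h1, _⟩
    · exact hbd h2
    · exact hxd h1
  have hperm1 : ({x, b, d, a} : Finset (Fin n)) = {x, a, b, d} := by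
    ext y; simp; tauto
  have hperm2 : ({x, a, d, b} : Finset (Fin n)) = {x, a, b, d} := by
    ext y; simp; tauto
  by_cases ha : e2 = s(x, a)
  · exact core hc (x := x) (a := b) (b := d) (d := a)
      (by rw [hperm1]; exact hcard) h2 h3 h1 hS (by rw [hperm1]; exact hsub)
      he1S he1d he2S he2d h1b h1d h1a
      (by rw [ha]; exact hsab) (by rw [ha]; exact hsad) hne hcc
  · by_cases hb : e2 = s(x, b)
    · exact core hc (x := x) (a := a) (b := d) (d := b)
        (by rw [hperm2]; exact hcard) h1 h3 h2 hS (by rw [hperm2]; exact hsub)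
        he1S he1d he2S he2d h1a h1d h1b
        (by rw [hb]; exact hsab.symm) (by rw [hb]; exact hsbd) hne hcc
    · exact core hc hcard h1 h2 h3 hS hsub he1S he1d he2S he2d
        h1a h1b h1d ha hb hne hcc

/-- In a `(5,8)`-coloring of `K_n` (`n ≥ 6`), two distinct monochromatic
3-star components (one with center `x`, leaves `a, b, d`, in color `k`; the other
with center `x'`, leaves `a', b', d'`, in color `k'`) share at most one vertex. -/
theorem mono_three_stars_share_at_most_one_vertex (n : ℕ) (hn : 6 ≤ n) (C : Type)
    (c : Sym2 (Fin n) → C) (hc : IsPQColoring n 5 8 c) (k k' : C)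
    (x a b d x' a' b' d' : Fin n)
    (hcard : ({x, a, b, d} : Finset (Fin n)).card = 4)
    (hcard' : ({x', a', b', d'} : Finset (Fin n)).card = 4)
    (hs1 : c s(x, a) = k) (hs2 : c s(x, b) = k) (hs3 : c s(x, d) = k)
    (hs1' : c s(x', a') = k') (hs2' : c s(x', b') = k') (hs3' : c s(x', d') = k')
    (hdistinct : ¬ (k = k' ∧ ({x, a, b, d} : Finset (Fin n)) = {x', a', b', d'})) :
    (({x, a, b, d} : Finset (Fin n)) ∩ ({x', a', b', d'} : Finset (Fin n))).card ≤ 1 := by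
  by_contra hle
  push_neg at hle
  obtain ⟨u, hu, v, hv, huv⟩ := Finset.one_lt_card.mp hle
  rw [Finset.mem_inter] at hu hv
  obtain ⟨huT, huT'⟩ := hu
  obtain ⟨hvT, hvT'⟩ := hv
  obtain ⟨hxa, hxb, hxd, hab, had, hbd⟩ := four_distinct hcard
  obtain ⟨hxa', hxb', hxd', hab', had', hbd'⟩ := four_distinct hcard'
  have hleaf : ∀ w : Fin n, w ∈ ({x, a, b, d} : Finset (Fin n)) → w ≠ x → c s(x, w) = k := by
    intro w hw hwx
    simp only [Finset.mem_insert, Finset.mem_singleton] at hw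
    rcases hw with rfl | rfl | rfl | rfl
    · exact absurd rfl hwx
    · exact hs1
    · exact hs2
    · exact hs3
  have hleaf' : ∀ w : Fin n, w ∈ ({x', a', b', d'} : Finset (Fin n)) → w ≠ x' →
      c s(x', w) = k' := by
    intro w hw hwx
    simp only [Finset.mem_insert, Finset.mem_singleton] at hw
    rcases hw with rfl | rfl | rfl | rfl
    · exact absurd rfl hwx
    · exact hs1'
    · exact hs2'
    · exact hs3'
  have hout : ∃ w : Fin n, w ∉ ({x, a, b, d} : Finset (Fin n)) := by
    by_contra h
    push_neg at h
    have h4 : (Finset.univ : Finset (Fin n)).card = 4 := by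
      rw [← Finset.eq_univ_iff_forall.2 h]; exact hcard
    rw [Finset.card_univ, Fintype.card_fin] at h4
    omega
  by_cases hx'T : x' ∈ ({x, a, b, d} : Finset (Fin n))
  · -- Case I : x' ∈ T
    have hp : ∃ p, p ∈ ({x, a, b, d} : Finset (Fin n)) ∧
        p ∈ ({x', a', b', d'} : Finset (Fin n)) ∧ p ≠ x' := by
      rcases eq_or_ne u x' with rfl | h
      · exact ⟨v, hvT, hvT', fun h' => huv h'.symm⟩
      · exact ⟨u, huT, huT', h⟩
    obtain ⟨p, hpT, hpT', hpx'⟩ := hp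
    by_cases hxx' : x' = x
    · have hpx : p ≠ x := fun h => hpx' (h.trans hxx'.symm)
      have hkk : k = k' := by
        have h2' := hleaf' p hpT' hpx'
        rw [hxx'] at h2'
        rw [← hleaf p hpT hpx]
        exact h2'
      have hTT' : ({x, a, b, d} : Finset (Fin n)) ≠ {x', a', b', d'} :=
        fun h => hdistinct ⟨hkk, h⟩
      have hl' : ∃ l', l' ∈ ({x', a', b', d'} : Finset (Fin n)) ∧
          l' ∉ ({x, a, b, d} : Finset (Fin n)) := by
        by_contra h
        push_neg at h
        exact hTT' (Finset.eq_of_subset_of_card_le (fun y hy => h y hy)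
          (by simp [hcard, hcard'])).symm
      obtain ⟨l', hl'T', hl'T⟩ := hl'
      have hl'x : l' ≠ x := fun h => hl'T (by rw [h]; simp)
      have hl'a : l' ≠ a := fun h => hl'T (by rw [h]; simp)
      have hl'b : l' ≠ b := fun h => hl'T (by rw [h]; simp)
      have hl'd : l' ≠ d := fun h => hl'T (by rw [h]; simp)
      have hS5 : (insert l' ({x, a, b, d} : Finset (Fin n))).card = 5 := by
        rw [Finset.card_insert_of_notMem hl'T, hcard]
      refine key hc hcard hs1 hs2 hs3 hS5 (Finset.subset_insert _ _)
        (e1 := s(x, l')) (e2 := s(x, a)) ?_ ?_ ?_ ?_ ?_ ?_ ?_ ?_ ?_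
      · exact Finset.mk_mem_sym2_iff.2
          ⟨Finset.mem_insert_of_mem (by simp), Finset.mem_insert_self _ _⟩
      · exact fun h => hl'x (Sym2.mk_isDiag_iff.1 h).symm
      · exact Finset.mk_mem_sym2_iff.2
          ⟨Finset.mem_insert_of_mem (by simp), Finset.mem_insert_of_mem (by simp)⟩
      · exact fun h => hxa (Sym2.mk_isDiag_iff.1 h)
      · intro h
        rcases Sym2.eq_iff.1 h with ⟨_, h2⟩ | ⟨h1, _⟩
        · exact hl'a h2
        · exact hxa h1
      · intro h
        rcases Sym2.eq_iff.1 h with ⟨_, h2⟩ | ⟨h1, _⟩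
        · exact hl'b h2
        · exact hxb h1
      · intro h
        rcases Sym2.eq_iff.1 h with ⟨_, h2⟩ | ⟨h1, _⟩
        · exact hl'd h2
        · exact hxd h1
      · intro h
        rcases Sym2.eq_iff.1 h with ⟨_, h2⟩ | ⟨h1, _⟩
        · exact hl'a h2.symm
        · exact hl'x h1.symm
      · have hl'x' : l' ≠ x' := fun h => hl'x (h.trans hxx')
        have hcl : c s(x', l') = k' := hleaf' l' hl'T' hl'x'
        rw [hxx'] at hcl
        rw [hcl, hs1]
        exact hkk.symm
    · -- x' ≠ x, x' ∈ T
      by_cases hpx : p = x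
      · subst hpx
        have e1' : c s(p, x') = k := hleaf x' hx'T hxx'
        have e2' : c s(x', p) = k' := hleaf' p hpT' hpx'
        rw [Sym2.eq_swap] at e2'
        have hkk : k = k' := by rw [← e1']; exact e2'
        have hTT' : ({p, a, b, d} : Finset (Fin n)) ≠ {x', a', b', d'} :=
          fun h => hdistinct ⟨hkk, h⟩
        have hq : ∃ q, q ∈ ({x', a', b', d'} : Finset (Fin n)) ∧
            q ∉ ({p, a, b, d} : Finset (Fin n)) := by
          by_contra h
          push_neg at h
          exact hTT' (Finset.eq_of_subset_of_card_le (fun y hy => h y hy)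
            (by simp [hcard, hcard'])).symm
        obtain ⟨q, hqT', hqT⟩ := hq
        have hqx : q ≠ p := fun h => hqT (by rw [h]; simp)
        have hqx' : q ≠ x' := fun h => hqT (h ▸ hx'T)
        have hS5 : (insert q ({p, a, b, d} : Finset (Fin n))).card = 5 := by
          rw [Finset.card_insert_of_notMem hqT, hcard]
        refine key hc hcard hs1 hs2 hs3 hS5 (Finset.subset_insert _ _)
          (e1 := s(x', q)) (e2 := s(p, a)) ?_ ?_ ?_ ?_ ?_ ?_ ?_ ?_ ?_
        · exact Finset.mk_mem_sym2_iff.2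
            ⟨Finset.mem_insert_of_mem hx'T, Finset.mem_insert_self _ _⟩
        · exact fun h => hqx' (Sym2.mk_isDiag_iff.1 h).symm
        · exact Finset.mk_mem_sym2_iff.2
            ⟨Finset.mem_insert_of_mem (by simp), Finset.mem_insert_of_mem (by simp)⟩
        · exact fun h => hxa (Sym2.mk_isDiag_iff.1 h)
        · intro h
          rcases Sym2.eq_iff.1 h with ⟨h1, _⟩ | ⟨_, h2⟩
          · exact hxx' h1
          · exact hqx h2
        · intro h
          rcases Sym2.eq_iff.1 h with ⟨h1, _⟩ | ⟨_, h2⟩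
          · exact hxx' h1
          · exact hqx h2
        · intro h
          rcases Sym2.eq_iff.1 h with ⟨h1, _⟩ | ⟨_, h2⟩
          · exact hxx' h1
          · exact hqx h2
        · intro h
          rcases Sym2.eq_iff.1 h with ⟨h1, _⟩ | ⟨h1, _⟩
          · exact hxx' h1.symm
          · exact hqx h1.symm
        · rw [hleaf' q hqT' hqx', hs1]
          exact hkk.symm
      · -- p ≠ x : generic two star2 edges
        have hq : ∃ q, q ∈ ({x', a', b', d'} : Finset (Fin n)) ∧ q ≠ x' ∧ q ≠ p := by
          have hp'' := hpT'
          simp only [Finset.mem_insert, Finset.mem_singleton] at hp''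
          rcases hp'' with rfl | rfl | rfl | rfl
          · exact absurd rfl hpx'
          · exact ⟨b', by simp, fun h => hxb' h.symm, fun h => hab' h.symm⟩
          · exact ⟨a', by simp, fun h => hxa' h.symm, hab'⟩
          · exact ⟨a', by simp, fun h => hxa' h.symm, had'⟩
        obtain ⟨q, hqT', hqx', hqp⟩ := hq
        have hSex : ∃ S : Finset (Fin n), S.card = 5 ∧
            ({x, a, b, d} : Finset (Fin n)) ⊆ S ∧ x' ∈ S ∧ p ∈ S ∧ q ∈ S := by
          by_cases hqT : q ∈ ({x, a, b, d} : Finset (Fin n))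
          · obtain ⟨w, hw⟩ := hout
            exact ⟨insert w {x, a, b, d},
              by rw [Finset.card_insert_of_notMem hw, hcard],
              Finset.subset_insert _ _, Finset.mem_insert_of_mem hx'T,
              Finset.mem_insert_of_mem hpT, Finset.mem_insert_of_mem hqT⟩
          · exact ⟨insert q {x, a, b, d},
              by rw [Finset.card_insert_of_notMem hqT, hcard],
              Finset.subset_insert _ _, Finset.mem_insert_of_mem hx'T,
              Finset.mem_insert_of_mem hpT, Finset.mem_insert_self _ _⟩
        obtain ⟨S, hS5, hsubS, hx'S, hpS, hqS⟩ := hSex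
        refine key hc hcard hs1 hs2 hs3 hS5 hsubS
          (e1 := s(x', p)) (e2 := s(x', q)) ?_ ?_ ?_ ?_ ?_ ?_ ?_ ?_ ?_
        · exact Finset.mk_mem_sym2_iff.2 ⟨hx'S, hpS⟩
        · exact fun h => hpx' (Sym2.mk_isDiag_iff.1 h).symm
        · exact Finset.mk_mem_sym2_iff.2 ⟨hx'S, hqS⟩
        · exact fun h => hqx' (Sym2.mk_isDiag_iff.1 h).symm
        · intro h
          rcases Sym2.eq_iff.1 h with ⟨h1, _⟩ | ⟨_, h2⟩
          · exact hxx' h1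
          · exact hpx h2
        · intro h
          rcases Sym2.eq_iff.1 h with ⟨h1, _⟩ | ⟨_, h2⟩
          · exact hxx' h1
          · exact hpx h2
        · intro h
          rcases Sym2.eq_iff.1 h with ⟨h1, _⟩ | ⟨_, h2⟩
          · exact hxx' h1
          · exact hpx h2
        · intro h
          rcases Sym2.eq_iff.1 h with ⟨_, h2⟩ | ⟨_, h2⟩
          · exact hqp h2
          · exact hqx' h2
        · rw [hleaf' p hpT' hpx', hleaf' q hqT' hqx']
  · -- Case II : x' ∉ T
    have hux' : u ≠ x' := fun h => hx'T (h ▸ huT)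
    have hvx' : v ≠ x' := fun h => hx'T (h ▸ hvT)
    have hx'x : x' ≠ x := fun h => hx'T (by rw [h]; simp)
    have hx'a : x' ≠ a := fun h => hx'T (by rw [h]; simp)
    have hx'b : x' ≠ b := fun h => hx'T (by rw [h]; simp)
    have hx'd : x' ≠ d := fun h => hx'T (by rw [h]; simp)
    have hS5 : (insert x' ({x, a, b, d} : Finset (Fin n))).card = 5 := by
      rw [Finset.card_insert_of_notMem hx'T, hcard]
    refine key hc hcard hs1 hs2 hs3 hS5 (Finset.subset_insert _ _)
      (e1 := s(x', u)) (e2 := s(x', v)) ?_ ?_ ?_ ?_ ?_ ?_ ?_ ?_ ?_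
    · exact Finset.mk_mem_sym2_iff.2
        ⟨Finset.mem_insert_self _ _, Finset.mem_insert_of_mem huT⟩
    · exact fun h => hux' (Sym2.mk_isDiag_iff.1 h).symm
    · exact Finset.mk_mem_sym2_iff.2
        ⟨Finset.mem_insert_self _ _, Finset.mem_insert_of_mem hvT⟩
    · exact fun h => hvx' (Sym2.mk_isDiag_iff.1 h).symm
    · intro h
      rcases Sym2.eq_iff.1 h with ⟨h1, _⟩ | ⟨h1, _⟩
      · exact hx'x h1
      · exact hx'a h1
    · intro h
      rcases Sym2.eq_iff.1 h with ⟨h1, _⟩ | ⟨h1, _⟩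
      · exact hx'x h1
      · exact hx'b h1
    · intro h
      rcases Sym2.eq_iff.1 h with ⟨h1, _⟩ | ⟨h1, _⟩
      · exact hx'x h1
      · exact hx'd h1
    · intro h
      rcases Sym2.eq_iff.1 h with ⟨_, h2⟩ | ⟨h1, _⟩
      · exact huv h2.symm
      · exact hux' h1.symm
    · rw [hleaf' u huT' hux', hleaf' v hvT' hvx']
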